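/- Let R be a ring whose only idempotents are 0 and 1. Then R is a GWNC ring if and only if R is a local ring whose Jacobson radical J(R) is nil. -/
import Mathlib


def IsWeaklyNilCleanElem {R : Type*} [Ring R] (a : R) : Prop :=
  ∃ e q : R, IsIdempotentElem e ∧ IsNilpotent q ∧ (a = q + e ∨ a = q - e)

def IsGWNCRing (R : Type*) [Ring R] : Prop :=
  ∀ a : R, ¬IsUnit a → IsWeaklyNilCleanElem a

/-- If `a` is nilpotent and left-invertible, then `1 = 0`. -/
private lemma aux_left_inv_nilpotent {R : Type*} [Ring R] {a s : R}
    (hn : IsNilpotent a) (hs : s * a = 1) : (1 : R) = 0 := by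
  obtain ⟨n, hnn⟩ := hn
  have key : ∀ k : ℕ, s ^ k * a ^ k = 1 := by
    intro k
    induction k with
    | zero => simp
    | succ k ih =>
      rw [pow_succ, pow_succ', mul_assoc, ← mul_assoc s a, hs, one_mul, ih]
  have := key n
  rw [hnn, mul_zero] at this
  exact this.symm

theorem isGWNC_iff_local_jacobson_nil_of_trivial_idempotents {R : Type*} [Ring R]
    (hid : ∀ e : R, IsIdempotentElem e → e = 0 ∨ e = 1) :
    IsGWNCRing R ↔
      ((∀ a : R, IsUnit a ∨ a ∈ Ideal.jacobson (⊥ : Ideal R)) ∧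
        ∀ x ∈ Ideal.jacobson (⊥ : Ideal R), IsNilpotent x) := by
  constructor
  · intro hG
    by_cases htriv : (1 : R) = 0
    · have hsub : ∀ x : R, x = 0 := fun x => by
        rw [← mul_one x, htriv, mul_zero]
      constructor
      · intro a
        left
        exact (hsub a) ▸ (htriv ▸ isUnit_one : IsUnit (0 : R))
      · intro x _
        exact ⟨1, by simp [hsub x]⟩
    -- nontrivial case
    have hnil : ∀ a : R, ¬IsUnit a → IsNilpotent a := by
      intro a ha
      obtain ⟨e, q, he, hq, heq⟩ := hG a ha
      rcases hid e he with rfl | rfl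
      · rcases heq with rfl | rfl
        · simpa using hq
        · simpa using hq
      · exfalso
        rcases heq with rfl | rfl
        · exact ha hq.isUnit_add_one
        · exact ha hq.isUnit_sub_one
    constructor
    · intro a
      by_cases ha : IsUnit a
      · exact Or.inl ha
      right
      have hna := hnil a ha
      rw [Ideal.mem_jacobson_iff]
      intro y
      by_cases hu : IsUnit (1 + y * a)
      · obtain ⟨u, hu⟩ := hu
        refine ⟨↑u⁻¹, ?_⟩
        have h1 : (↑u⁻¹ : R) * (1 + y * a) = 1 := by rw [← hu]; exact u.inv_mul
        rw [mul_add, mul_one] at h1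
        simp only [Ideal.mem_bot]
        rw [mul_assoc, sub_eq_zero, add_comm]
        exact h1
      · exfalso
        have hq := hnil _ hu
        have hunit : IsUnit (y * a) := by
          have h2 := hq.isUnit_sub_one
          rwa [add_sub_cancel_left] at h2
        obtain ⟨u, hu'⟩ := hunit
        have hs : (↑u⁻¹ * y) * a = 1 := by
          rw [mul_assoc, ← hu']
          exact u.inv_mul
        exact htriv (aux_left_inv_nilpotent hna hs)
    · intro x hx
      apply hnil
      intro hxu
      obtain ⟨u, hu⟩ := hxu
      obtain ⟨z, hz⟩ := Ideal.mem_jacobson_iff.mp hx (-(↑u⁻¹))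
      simp only [Ideal.mem_bot] at hz
      have h1 : (-(↑u⁻¹ : R)) * x = -1 := by
        rw [neg_mul, ← hu, u.inv_mul]
      have h2 : z * (-(↑u⁻¹ : R)) * x = -z := by
        rw [mul_assoc, h1, mul_neg_one]
      rw [h2, neg_add_cancel, zero_sub, neg_eq_zero] at hz
      exact htriv hz
  · rintro ⟨hloc, hnil⟩ a ha
    rcases hloc a with h | h
    · exact absurd h ha
    · exact ⟨0, a, IsIdempotentElem.zero, hnil a h, Or.inl (add_zero a).symm⟩
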